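/- Let F be an algebraically closed field of characteristic 2, let M be a function field over F, and let t ∈ M be transcendental over F, not a square in M (so M/F(t) is separable), and such that all zeros and poles of t are simple. Then for all x, y ∈ M and every natural number s, the following are equivalent. (a) There exist natural numbers j, r and elements u, ũ, v, ṽ ∈ M such that x² + t, x² + t^{−1}, y² + t^{2^s}, y² + t^{−2^s} are all nonzero and u = (x² + t² + t)/(x² + t), ũ = (x² + t^{−2} + t^{−1})/(x² + t^{−1}), v = (y² + t^{2^{s+1}} + t^{2^s})/(y² + t^{2^s}), ṽ = (y² + t^{−2^{s+1}} + t^{−2^s})/(y² + t^{−2^s}), v = u^{2^r}, and ṽ = ũ^{2^j}. (b) y = x^{2^s}. -/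

import Mathlib

section Aux
variable {M : Type*} [Field M]

lemma sqa (h2 : (2:M) = 0) (a b : M) : (a+b)^2 = a^2+b^2 := by
  linear_combination a*b*h2

lemma powp (h2 : (2:M) = 0) (a b : M) (k : ℕ) : (a+b)^(2^k) = a^(2^k) + b^(2^k) := by
  induction k with
  | zero => simp
  | succ n ih => rw [pow_succ, pow_mul, ih, sqa h2]; ring

lemma frobi (h2 : (2:M) = 0) {a b : M} (h : a^2 = b^2) : a = b := by
  have h0 : (a+b)^2 = 0 := by rw [sqa h2, h]; linear_combination b^2*h2
  have hab : a + b = 0 := pow_eq_zero_iff two_ne_zero |>.mp h0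
  linear_combination hab - b*h2

lemma keyE (h2 : (2:M) = 0) {T : M} (hT : T ≠ 0) (x y : M) (s r : ℕ)
    (hd1 : x^2 + T ≠ 0) (hd2 : y^2 + T^(2^s) ≠ 0)
    (heq : (y^2 + T^(2^(s+1)) + T^(2^s))/(y^2 + T^(2^s)) = ((x^2 + T^2 + T)/(x^2+T))^(2^r)) :
    (y + (T^(2^s)/T^(2^r)) * x^(2^r))^2 = T^(2^s) + T^(2^(s+1))/T^(2^r) := by
  have hd1' : (x^2+T)^(2^r) ≠ 0 := pow_ne_zero _ hd1
  rw [div_pow, div_eq_div_iff hd2 hd1'] at heq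
  have e1 : (x^2+T)^(2^r) = (x^2)^(2^r) + T^(2^r) := powp h2 _ _ r
  have e2 : (x^2+T^2+T)^(2^r) = (x^2)^(2^r) + (T^2)^(2^r) + T^(2^r) := by
    rw [show x^2+T^2+T = (x^2+T^2)+T by ring, powp h2, powp h2]
  rw [e1, e2] at heq
  field_simp
  linear_combination heq + (y^2*T^(2^r*2) + y*T^(2^r)*T^(2^s)*x^(2^r) - T^(2^r)*T^(2^s*2)) * h2
lemma core (h2 : (2:M) = 0) {t : M} (ht0 : t ≠ 0) (hnp : ∀ c : M, c^2 ≠ t)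
    (htpow : ∀ m n : ℕ, t^m = t^n → m = n) :
    ∀ σ ρ γ : ℕ, ρ ≠ σ → γ ≠ σ → ∀ x : M,
    t^(2^(σ+2))*x^(2^(ρ+1)) + t^(2^(γ+1))*t^(2^(ρ+1))*x^(2^(γ+1))
      ≠ t^(2^σ)*t^(2^(σ+1))*t^(2^(ρ+1)) + t^(2^(σ+1))*t^(2^(σ+1))*t^(2^ρ)
        + t^(2^σ)*t^(2^(ρ+1)) + t^(2^γ)*t^(2^(ρ+1)) := by
  intro σ
  induction σ with
  | zero =>
    intro ρ γ hρ hγ x h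
    obtain ⟨ρ, rfl⟩ : ∃ k, ρ = k+1 := ⟨ρ-1, by omega⟩
    obtain ⟨γ, rfl⟩ : ∃ k, γ = k+1 := ⟨γ-1, by omega⟩
    set V : M := t^2*x^(2^(ρ+1)) + t^(2^(γ+1))*t^(2^(ρ+1))*x^(2^(γ+1)) + t^2*t^(2^ρ)
        + t^(2^γ)*t^(2^(ρ+1)) with hV_def
    have hkey : V^2 = t*t^(2^(ρ+2))*(t+1)^2 := by
      rw [hV_def]
      linear_combination h + (t^2*t^(2^ρ*2)*t^(2^γ)*x^(2^ρ*2) + t^2*t^(2^ρ*2)*t^(2^γ*2)*x^(2^ρ*2)*x^(2^γ*2) + t^2*t^(2^ρ*3)*t^(2^γ) + t^2*t^(2^ρ*3)*t^(2^γ*2)*x^(2^γ*2) - t^2*t^(2^ρ*4) + t^4*t^(2^ρ)*x^(2^ρ*2) + t^4*t^(2^ρ*2) + t^(2^ρ*4)*t^(2^γ*2) + t^(2^ρ*4)*t^(2^γ*3)*x^(2^γ*2))*h2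
    have ht1 : t + 1 ≠ 0 := by
      intro h0
      have h1 : t^1 = t^0 := by
        simp only [pow_one, pow_zero]
        linear_combination h0 - h2
      have := htpow 1 0 h1
      omega
    have hV : V ≠ 0 := by
      intro h0
      apply (mul_ne_zero (mul_ne_zero ht0 (pow_ne_zero _ ht0)) (pow_ne_zero 2 ht1))
      rw [← hkey, h0]; ring
    apply hnp ((t+1)*t^(2^(ρ+1))*t/V)
    rw [div_pow, div_eq_iff (pow_ne_zero _ hV)]
    linear_combination t*hkey + (-(t*t^(2^ρ*4)*t^(2^γ*2)) - t*t^(2^ρ*4)*t^(2^γ*3)*x^(2^γ*2)*2 - t*t^(2^ρ*4)*t^(2^γ*4)*x^(2^γ*4) + t^2*t^(2^ρ*4) - t^3*t^(2^ρ*2)*t^(2^γ)*x^(2^ρ*2)*2 - t^3*t^(2^ρ*2)*t^(2^γ*2)*x^(2^ρ*2)*x^(2^γ*2)*2 - t^3*t^(2^ρ*3)*t^(2^γ)*2 - t^3*t^(2^ρ*3)*t^(2^γ*2)*x^(2^γ*2)*2 + t^3*t^(2^ρ*4)*2 + t^4*t^(2^ρ*4) - t^5*t^(2^ρ)*x^(2^ρ*2)*2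 - t^5*t^(2^ρ*2) - t^5*x^(2^ρ*4))*h2
  | succ σ IH =>
    intro ρ γ hρ hγ x h
    rcases ρ with _|ρ
    · rcases γ with _|γ
      · -- case (0,0)
        set V : M := t^(2^(σ+2))*x + t*t*x + t^(2^σ)*t^(2^(σ+1))*t + t^(2^σ)*t with hV_def
        have hD : t^(2^(σ+2)) + t ≠ 0 := by
          intro h0
          have h1 : t^(2^(σ+2)) = t^1 := by
            rw [pow_one]; linear_combination h0 - t*h2
          have h3 := htpow _ _ h1
          have : (1:ℕ) < 2^(σ+2) := Nat.one_lt_two_pow' (σ+1)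
          omega
        have hkey : V^2 = t*(t^(2^(σ+2))+t)^2 := by
          rw [hV_def]
          linear_combination h + (t*t^(2^σ*5)*x + t*t^(2^σ*7)*x + t^2*t^(2^σ*2) + t^2*t^(2^σ*4)*x^2 + t^2*t^(2^σ*6) + t^3*t^(2^σ)*x + t^3*t^(2^σ*3)*x)*h2
        have hV : V ≠ 0 := by
          intro h0
          apply mul_ne_zero ht0 (pow_ne_zero 2 hD)
          rw [← hkey, h0]; ring
        apply hnp ((t^(2^(σ+2))+t)*t/V)
        rw [div_pow, div_eq_iff (pow_ne_zero _ hV)]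
        linear_combination t*hkey + (-(t*t^(2^σ*8)*x^2) - t^2*t^(2^σ*5)*x*2 - t^2*t^(2^σ*7)*x*2 + t^2*t^(2^σ*8) - t^3*t^(2^σ*2) - t^3*t^(2^σ*4)*x^2*2 - t^3*t^(2^σ*6) + t^4 - t^4*t^(2^σ)*x*2 - t^4*t^(2^σ*3)*x*2 - t^5*x^2)*h2
      · -- case (0,γ+1)
        set V : M := t^(2^(σ+2))*x + t^(2^(γ+1))*t*x^(2^(γ+1)) + t^(2^σ)*t^(2^(σ+1))*t
            + t^(2^σ)*t + t^(2^γ)*t with hV_def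
        have hkey : V^2 = t^(2^(σ+2))*t^(2^(σ+2))*t := by
          rw [hV_def]
          linear_combination h + (t*t^(2^σ*4)*t^(2^γ)*x + t*t^(2^σ*4)*t^(2^γ*2)*x*x^(2^γ*2) + t*t^(2^σ*5)*x + t*t^(2^σ*7)*x + t^2*t^(2^σ)*t^(2^γ) + t^2*t^(2^σ)*t^(2^γ*2)*x^(2^γ*2) + t^2*t^(2^σ*2) + t^2*t^(2^σ*3)*t^(2^γ) + t^2*t^(2^σ*3)*t^(2^γ*2)*x^(2^γ*2) + t^2*t^(2^σ*4) + t^2*t^(2^σ*6) + t^2*t^(2^γ*2) + t^2*t^(2^γ*3)*x^(2^γ*2))*h2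
        apply hnp (V/t^(2^(σ+2)))
        rw [div_pow, div_eq_iff (pow_ne_zero _ (pow_ne_zero _ ht0))]
        linear_combination hkey
    · rcases γ with _|γ
      · -- case (ρ+1,0)
        set V : M := t^(2^(σ+2))*x^(2^(ρ+1)) + t*t^(2^(ρ+1))*x + t^(2^σ)*t^(2^(σ+1))*t^(2^(ρ+1))
            + t^(2^(σ+1))*t^(2^(σ+1))*t^(2^ρ) + t^(2^σ)*t^(2^(ρ+1)) with hV_def
        have hkey : V^2 = t*t^(2^(ρ+2)) := by
          rw [hV_def]
          linear_combination h + (t*t^(2^σ)*t^(2^ρ*4)*x + t*t^(2^σ*3)*t^(2^ρ*4)*x + t*t^(2^σ*4)*t^(2^ρ*2)*x*x^(2^ρ*2) + t*t^(2^σ*4)*t^(2^ρ*3)*x + t^(2^σ*2)*t^(2^ρ*4) + t^(2^σ*4)*t^(2^ρ*4) + t^(2^σ*5)*t^(2^ρ*2)*x^(2^ρ*2) + t^(2^σ*5)*t^(2^ρ*3) + t^(2^σ*6)*t^(2^ρ*4) + t^(2^σ*7)*t^(2^ρ*2)*x^(2^ρ*2) + t^(2^σ*7)*t^(2^ρ*3)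 + t^(2^σ*8)*t^(2^ρ)*x^(2^ρ*2) + t^(2^σ*8)*t^(2^ρ*2))*h2
        apply hnp (V/t^(2^(ρ+1)))
        rw [div_pow, div_eq_iff (pow_ne_zero _ (pow_ne_zero _ ht0))]
        linear_combination hkey
      · -- step case
        have hsq : (t^(2^(σ+2))*x^(2^(ρ+1)) + t^(2^(γ+1))*t^(2^(ρ+1))*x^(2^(γ+1)))^2
            = (t^(2^σ)*t^(2^(σ+1))*t^(2^(ρ+1)) + t^(2^(σ+1))*t^(2^(σ+1))*t^(2^ρ)
              + t^(2^σ)*t^(2^(ρ+1)) + t^(2^γ)*t^(2^(ρ+1)))^2 := by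
          linear_combination h + (-(t^(2^σ)*t^(2^ρ*4)*t^(2^γ)) - t^(2^σ*3)*t^(2^ρ*4)*t^(2^γ) + t^(2^σ*4)*t^(2^ρ*2)*t^(2^γ*2)*x^(2^ρ*2)*x^(2^γ*2) - t^(2^σ*4)*t^(2^ρ*3)*t^(2^γ) - t^(2^σ*4)*t^(2^ρ*4) - t^(2^σ*5)*t^(2^ρ*3) - t^(2^σ*7)*t^(2^ρ*3))*h2
        exact IH ρ γ (by omega) (by omega) x (frobi h2 hsq)

end Aux


/-- A prime of a function field `M` over a constant field `F`: a surjective additive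
valuation `M → ℤ` that is trivial on `F`. -/
structure FFPrime (F M : Type*) [Field F] [Field M] [Algebra F M] where
  v : M → ℤ
  map_mul : ∀ x y : M, x ≠ 0 → y ≠ 0 → v (x * y) = v x + v y
  add_min : ∀ x y : M, x ≠ 0 → y ≠ 0 → x + y ≠ 0 → min (v x) (v y) ≤ v (x + y)
  surj : ∀ n : ℤ, ∃ x : M, x ≠ 0 ∧ v x = n
  triv : ∀ c : F, c ≠ 0 → v (algebraMap F M c) = 0

/-- Let `F` be algebraically closed of characteristic `2`, `M` a function field over
`F`, and `t ∈ M` transcendental over `F`, not a square in `M`, with all zeros and poles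
of `t` simple. Then for `x, y ∈ M` and `s : ℕ`, the system `E2` is solvable in `M` if
and only if `y = x^{2^s}`. -/
theorem stmt_18 {F M : Type*} [Field F] [Field M] [Algebra F M] [IsAlgClosed F]
    [CharP F 2]
    (t : M) (htrans : Transcendental F t)
    (hfin : FiniteDimensional (IntermediateField.adjoin F {t}) M)
    (hnp : ¬∃ c : M, c ^ 2 = t)
    (hsimple : ∀ P : FFPrime F M, P.v t ∈ ({-1, 0, 1} : Set ℤ))
    (x y : M) (s : ℕ) :
    (∃ (j r : ℕ) (u ut v vt : M),
      x ^ 2 + t ≠ 0 ∧ x ^ 2 + t⁻¹ ≠ 0 ∧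
      y ^ 2 + t ^ 2 ^ s ≠ 0 ∧ y ^ 2 + t⁻¹ ^ 2 ^ s ≠ 0 ∧
      u = (x ^ 2 + t ^ 2 + t) / (x ^ 2 + t) ∧
      ut = (x ^ 2 + t⁻¹ ^ 2 + t⁻¹) / (x ^ 2 + t⁻¹) ∧
      v = (y ^ 2 + t ^ 2 ^ (s + 1) + t ^ 2 ^ s) / (y ^ 2 + t ^ 2 ^ s) ∧
      vt = (y ^ 2 + t⁻¹ ^ 2 ^ (s + 1) + t⁻¹ ^ 2 ^ s) / (y ^ 2 + t⁻¹ ^ 2 ^ s) ∧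
      v = u ^ 2 ^ r ∧ vt = ut ^ 2 ^ j)
    ↔ y = x ^ 2 ^ s := by
  have h2 : (2:M) = 0 := by
    have hF : (2:F) = 0 := by exact_mod_cast CharP.cast_eq_zero F 2
    calc (2:M) = algebraMap F M 2 := by rw [map_ofNat]
    _ = 0 := by rw [hF, map_zero]
  have ht0 : t ≠ 0 := by
    intro h; exact htrans (h ▸ isAlgebraic_zero)
  have hti0 : t⁻¹ ≠ 0 := inv_ne_zero ht0
  have hnp' : ∀ c : M, c^2 ≠ t := by push_neg at hnp; exact hnp
  have htpow : ∀ m n : ℕ, t^m = t^n → m = n := by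
    intro m n h
    by_contra hne
    apply htrans
    refine ⟨Polynomial.X^m - Polynomial.X^n, sub_ne_zero.mpr ?_, by simp [h]⟩
    intro hh
    exact hne (by simpa using congrArg Polynomial.natDegree hh)
  constructor
  · rintro ⟨j, r, u, ut, v, vt, hx1, hx2, hy1, hy2, hu, hut, hv, hvt, hvu, hvtut⟩
    rw [hv, hu] at hvu
    rw [hvt, hut] at hvtut
    have E1 := keyE h2 ht0 x y s r hx1 hy1 hvu
    have E2 := keyE h2 hti0 x y s j hx2 hy2 hvtut
    field_simp at E1 E2
    have E1c : (y*t^(2^r) + t^(2^s)*x^(2^r))^2 = t^(2^s)*t^(2^r)*t^(2^r) + t^(2^(s+1))*t^(2^r) := by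
      refine mul_right_cancel₀ (pow_ne_zero (2^r) ht0) ?_
      linear_combination t^(2^r) * E1
    have E2c : (y*t^(2^s) + t^(2^j)*x^(2^j))^2 = t^(2^s) + t^(2^j) := by
      refine mul_right_cancel₀ (mul_ne_zero (pow_ne_zero (2^s) ht0) (pow_ne_zero (2^(s+1)) ht0)) ?_
      simp only [one_div, inv_pow] at E2
      field_simp at E2
      linear_combination t^(2^s) * E2
    by_cases hrs : r = s
    · subst hrs
      have h0 : (y*t^(2^r) + t^(2^r)*x^(2^r))^2 = 0 := by
        rw [E1c]; linear_combination (t^(2^r)*t^(2^r)*t^(2^r))*h2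
      have h1 := pow_eq_zero_iff two_ne_zero |>.mp h0
      have h3 : y + x^(2^r) = 0 := by
        have := mul_eq_zero.mp (show (y + x^(2^r))*t^(2^r) = 0 by linear_combination h1)
        exact this.resolve_right (pow_ne_zero _ ht0)
      linear_combination h3 - x^(2^r)*h2
    by_cases hjs : j = s
    · subst hjs
      have h0 : (y*t^(2^j) + t^(2^j)*x^(2^j))^2 = 0 := by
        rw [E2c]; linear_combination (t^(2^j))*h2
      have h1 := pow_eq_zero_iff two_ne_zero |>.mp h0
      have h3 : y + x^(2^j) = 0 := by
        have := mul_eq_zero.mp (show (y + x^(2^j))*t^(2^j) = 0 by linear_combination h1)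
        exact this.resolve_right (pow_ne_zero _ ht0)
      linear_combination h3 - x^(2^j)*h2
    exfalso
    rcases s with _|σ
    · -- s = 0 : use E1c with r ≠ 0
      obtain ⟨ρ, rfl⟩ : ∃ k, r = k+1 := ⟨r-1, by omega⟩
      apply hnp' ((y*t^(2^(ρ+1)) + t*x^(2^(ρ+1)) + t*t^(2^ρ))/t^(2^(ρ+1)))
      rw [div_pow, div_eq_iff (pow_ne_zero _ (pow_ne_zero _ ht0))]
      linear_combination E1c + (y*t*t^(2^ρ*3) + t^2*t^(2^ρ)*x^(2^ρ*2) + t^2*t^(2^ρ*2))*h2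
    rcases Nat.eq_zero_or_pos r with hr0 | hrpos
    · subst hr0
      apply hnp' ((y*t + t^(2^(σ+1))*x + t*t^(2^σ))/t^(2^(σ+1)))
      rw [div_pow, div_eq_iff (pow_ne_zero _ (pow_ne_zero _ ht0))]
      linear_combination E1c + (y*t^2*t^(2^σ) + t*t^(2^σ*3)*x + t^2*t^(2^σ*2))*h2
    rcases Nat.eq_zero_or_pos j with hj0 | hjpos
    · subst hj0
      apply hnp' (y*t^(2^(σ+1)) + t*x + t^(2^σ))
      linear_combination E2c + (y*t^(2^σ*3) + t*t^(2^σ)*x + t^(2^σ*2))*h2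
    obtain ⟨ρ, rfl⟩ : ∃ k, r = k+1 := ⟨r-1, by omega⟩
    obtain ⟨γ, rfl⟩ : ∃ k, j = k+1 := ⟨j-1, by omega⟩
    have hA : y*t^(2^(ρ+1)) + t^(2^(σ+1))*x^(2^(ρ+1)) = t^(2^σ)*t^(2^(ρ+1)) + t^(2^(σ+1))*t^(2^ρ) := by
      apply frobi h2
      rw [E1c]
      linear_combination (-(t^(2^σ*3)*t^(2^ρ*3)))*h2
    have hB : y*t^(2^(σ+1)) + t^(2^(γ+1))*x^(2^(γ+1)) = t^(2^σ) + t^(2^γ) := by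
      apply frobi h2
      rw [E2c]
      linear_combination (-(t^(2^σ)*t^(2^γ)))*h2
    have hE : t^(2^(σ+2))*x^(2^(ρ+1)) + t^(2^(γ+1))*t^(2^(ρ+1))*x^(2^(γ+1))
        = t^(2^σ)*t^(2^(σ+1))*t^(2^(ρ+1)) + t^(2^(σ+1))*t^(2^(σ+1))*t^(2^ρ)
          + t^(2^σ)*t^(2^(ρ+1)) + t^(2^γ)*t^(2^(ρ+1)) := by
      linear_combination t^(2^(σ+1))*hA + t^(2^(ρ+1))*hB - (y*t^(2^(ρ+1))*t^(2^(σ+1)))*h2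
    exact core h2 ht0 hnp' htpow σ ρ γ (by omega) (by omega) x hE
  · intro hy
    subst hy
    have hx1 : x^2 + t ≠ 0 := by
      intro h; exact hnp' x (by linear_combination h - t*h2)
    have hx2 : x^2 + t⁻¹ ≠ 0 := by
      intro h
      apply hnp' x⁻¹
      have hti : t⁻¹ = x^2 := by linear_combination h - x^2*h2
      rw [inv_pow, ← hti, inv_inv]
    have hy1 : (x^(2^s))^2 + t^(2^s) ≠ 0 := by
      rw [show (x^(2^s))^2 + t^(2^s) = (x^2+t)^(2^s) by rw [powp h2]; ring]
      exact pow_ne_zero _ hx1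
    have hy2 : (x^(2^s))^2 + t⁻¹^(2^s) ≠ 0 := by
      rw [show (x^(2^s))^2 + t⁻¹^(2^s) = (x^2+t⁻¹)^(2^s) by rw [powp h2]; ring]
      exact pow_ne_zero _ hx2
    refine ⟨s, s, _, _, _, _, hx1, hx2, hy1, hy2, rfl, rfl, rfl, rfl, ?_, ?_⟩
    · rw [div_pow, show (x^2+t^2+t)^(2^s) = (x^(2^s))^2 + t^(2^(s+1)) + t^(2^s) by
        rw [show x^2+t^2+t = (x^2+t^2)+t by ring, powp h2, powp h2]; ring,
        show (x^2+t)^(2^s) = (x^(2^s))^2 + t^(2^s) by rw [powp h2]; ring]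
    · rw [div_pow, show (x^2+t⁻¹^2+t⁻¹)^(2^s) = (x^(2^s))^2 + t⁻¹^(2^(s+1)) + t⁻¹^(2^s) by
        rw [show x^2+t⁻¹^2+t⁻¹ = (x^2+t⁻¹^2)+t⁻¹ by ring, powp h2, powp h2]; ring,
        show (x^2+t⁻¹)^(2^s) = (x^(2^s))^2 + t⁻¹^(2^s) by rw [powp h2]; ring]
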